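/- Let R be a commutative local ring, e ≥ 2 an integer, A := R[X]/(X^e), π the image of X, E a finite free A-module of rank h₁, and let 0 = F^{[0]} ⊆ F^{[1]} ⊆ ⋯ ⊆ F^{[e]} be a Pappas–Rapoport filtration of rank d₁ on E, with 0 < d₁ < h₁. For 0 ≤ j ≤ e−1 define F'^{[j]} := {x ∈ E : π·x ∈ F^{[j]}}. Then for every 0 ≤ j ≤ e−1: (i) F^{[j+1]} ⊆ F'^{[j]} and π·F'^{[j]} = F^{[j]}; (ii) F'^{[j]} is a direct summand of E as an R-module and is a finite free R-module of rank h₁ + j·d₁. -/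

import Mathlib

/-- The ring `A = R[X]/(X^e)`. -/
abbrev TruncPoly (R : Type*) [CommRing R] (e : ℕ) : Type _ :=
  Polynomial R ⧸ Ideal.span {(Polynomial.X : Polynomial R) ^ e}

/-- The image `π` of `X` in `A = R[X]/(X^e)`. -/
noncomputable def piX (R : Type*) [CommRing R] (e : ℕ) : TruncPoly R e :=
  Ideal.Quotient.mk _ Polynomial.X

/-- Multiplication by `π^k`, as an `R`-linear endomorphism of a module over `R[X]/(X^e)`. -/
noncomputable def mulPi (R : Type*) [CommRing R] (e : ℕ)
    (E : Type*) [AddCommGroup E] [Module (TruncPoly R e) E] [Module R E]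
    [IsScalarTower R (TruncPoly R e) E] (k : ℕ) : E →ₗ[R] E :=
  (LinearMap.lsmul (TruncPoly R e) E (piX R e ^ k)).restrictScalars R

/-- A Pappas–Rapoport filtration of rank `d₁` on a module `E` over `A = R[X]/(X^e)`:
a chain of `R`-submodules `0 = F^{[0]} ⊆ F^{[1]} ⊆ ⋯ ⊆ F^{[e]}` of `E` such that each
`F^{[j]}` is an `R`-module direct summand of `E`, each quotient `F^{[j]}/F^{[j-1]}` is a
finite free `R`-module of rank `d₁`, and `π·F^{[j]} ⊆ F^{[j-1]}` for `1 ≤ j ≤ e`. -/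
def IsPRFiltration (R : Type*) [CommRing R] (e : ℕ)
    (E : Type*) [AddCommGroup E] [Module (TruncPoly R e) E] [Module R E]
    [IsScalarTower R (TruncPoly R e) E] (d₁ : ℕ) (F : ℕ → Submodule R E) : Prop :=
  F 0 = ⊥ ∧
  (∀ j < e, F j ≤ F (j + 1)) ∧
  (∀ j ≤ e, ∃ q : Submodule R E, IsCompl (F j) q) ∧
  (∀ j < e,
    Module.Finite R (↥(F (j + 1)) ⧸ (F j).comap (F (j + 1)).subtype) ∧
    Module.Free R (↥(F (j + 1)) ⧸ (F j).comap (F (j + 1)).subtype) ∧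
    Module.finrank R (↥(F (j + 1)) ⧸ (F j).comap (F (j + 1)).subtype) = d₁) ∧
  (∀ j < e, ∀ x ∈ F (j + 1), piX R e • x ∈ F j)

/-- The member `F^{[e+j]} := {x ∈ E : π^j·x ∈ F^{[e-j]}}` of the extended
(dual) Pappas–Rapoport filtration. -/
noncomputable def PRext (R : Type*) [CommRing R] (e : ℕ)
    (E : Type*) [AddCommGroup E] [Module (TruncPoly R e) E] [Module R E]
    [IsScalarTower R (TruncPoly R e) E] (F : ℕ → Submodule R E) (j : ℕ) : Submodule R E :=
  (F (e - j)).comap (mulPi R e E j)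

/-- The submodule `F'^{[j]} := {x ∈ E : π·x ∈ F^{[j]}}`. -/
noncomputable def PRdiv (R : Type*) [CommRing R] (e : ℕ)
    (E : Type*) [AddCommGroup E] [Module (TruncPoly R e) E] [Module R E]
    [IsScalarTower R (TruncPoly R e) E] (F : ℕ → Submodule R E) (j : ℕ) : Submodule R E :=
  (F j).comap (mulPi R e E 1)

/-! ### Auxiliary general lemmas -/

section GeneralAux

variable {R : Type*} [CommRing R] {M : Type*} [AddCommGroup M] [Module R M]

/-- If `M ⧸ N` is projective, then `N` has a complement. -/
theorem PR.exists_isCompl_of_proj_quot (N : Submodule R M) [Module.Projective R (M ⧸ N)] :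
    ∃ q : Submodule R M, IsCompl N q := by
  obtain ⟨s, hs⟩ := Module.projective_lifting_property N.mkQ LinearMap.id N.mkQ_surjective
  have hs' : ∀ y, N.mkQ (s y) = y := fun y => by
    simpa using LinearMap.congr_fun hs y
  refine ⟨LinearMap.range s, ?_, ?_⟩
  · rw [Submodule.disjoint_def]
    rintro x hxN ⟨y, rfl⟩
    have h0 : N.mkQ (s y) = 0 := by
      rw [Submodule.mkQ_apply, Submodule.Quotient.mk_eq_zero]; exact hxN
    rw [hs'] at h0
    rw [h0, map_zero]
  · rw [codisjoint_iff, eq_top_iff]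
    intro x _
    have h1 : x - s (N.mkQ x) ∈ N := by
      rw [← Submodule.Quotient.mk_eq_zero N, ← Submodule.mkQ_apply, map_sub, hs', sub_self]
    have h2 : x = (x - s (N.mkQ x)) + s (N.mkQ x) := by abel
    rw [h2]
    exact Submodule.add_mem_sup h1 ⟨N.mkQ x, rfl⟩

/-- A direct summand of a projective module is projective. -/
theorem PR.projective_of_isCompl [Module.Projective R M] {p q : Submodule R M}
    (h : IsCompl p q) : Module.Projective R p :=
  Module.Projective.of_split p.subtype (p.linearProjOfIsCompl q h)
    (Submodule.linearProjOfIsCompl_comp_subtype h)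

/-- A direct summand of a finite module is finite. -/
theorem PR.finite_of_isCompl [Module.Finite R M] {p q : Submodule R M}
    (h : IsCompl p q) : Module.Finite R p :=
  Module.Finite.of_surjective (p.linearProjOfIsCompl q h)
    (fun x => ⟨x, Submodule.linearProjOfIsCompl_apply_left h x⟩)

/-- A finite projective module over a local ring is free. -/
theorem PR.free_of_fp [IsLocalRing R] [Module.Finite R M] [Module.Projective R M] :
    Module.Free R M :=
  have := Module.finitePresentation_of_projective R M
  Module.free_of_flat_of_isLocalRing

/-- `finrank` is additive on complements. -/
theorem PR.finrank_add_of_isCompl [Nontrivial R] {p q : Submodule R M} (h : IsCompl p q)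
    [Module.Finite R p] [Module.Free R p] [Module.Finite R q] [Module.Free R q] :
    Module.finrank R M = Module.finrank R p + Module.finrank R q := by
  rw [← (Submodule.prodEquivOfIsCompl p q h).finrank_eq, Module.finrank_prod]

end GeneralAux

/-! ### Spans of subsets of a basis -/

section BasisSpan

variable {R : Type*} [CommRing R] {M : Type*} [AddCommGroup M] [Module R M]
variable {κ : Type*} (v : Module.Basis κ R M) (s : Set κ)

theorem PR.span_basis_image_eq :
    Submodule.span R (v '' s) =
      (Finsupp.supported R R s).map (v.repr.symm : (κ →₀ R) →ₗ[R] M) := by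
  rw [Finsupp.supported_eq_span_single, Submodule.map_span]
  congr 1
  rw [Set.image_image]
  exact (Set.image_congr' (fun i => (v.repr_symm_single_one i).symm)).symm

theorem PR.isCompl_map_equiv {M₂ : Type*} [AddCommGroup M₂] [Module R M₂]
    (e : M ≃ₗ[R] M₂) {p q : Submodule R M} (h : IsCompl p q) :
    IsCompl (p.map (e : M →ₗ[R] M₂)) (q.map (e : M →ₗ[R] M₂)) := by
  constructor
  · rw [Submodule.disjoint_def]
    rintro x ⟨y, hy, rfl⟩ ⟨z, hz, hez⟩
    have hzy : z = y := e.injective (by simpa using hez)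
    subst hzy
    have : z ∈ p ⊓ q := ⟨hy, hz⟩
    rw [h.inf_eq_bot, Submodule.mem_bot] at this
    rw [this]
    exact map_zero _
  · rw [codisjoint_iff, eq_top_iff]
    intro x _
    have hy : e.symm x ∈ p ⊔ q := by rw [h.sup_eq_top]; trivial
    obtain ⟨a, ha, b, hb, hab⟩ := Submodule.mem_sup.mp hy
    refine Submodule.mem_sup.mpr ⟨e a, ⟨a, ha, rfl⟩, e b, ⟨b, hb, rfl⟩, ?_⟩
    have : e (a + b) = x := by rw [hab]; exact e.apply_symm_apply x
    rw [← this, map_add]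

theorem PR.isCompl_span_basis_image :
    IsCompl (Submodule.span R (v '' s)) (Submodule.span R (v '' sᶜ)) := by
  have h1 : IsCompl (Finsupp.supported R R s) (Finsupp.supported R R sᶜ) := by
    constructor
    · exact Finsupp.disjoint_supported_supported disjoint_compl_right
    · rw [codisjoint_iff, ← Finsupp.supported_union, Set.union_compl_self,
        Finsupp.supported_univ]
  have h2 := PR.isCompl_map_equiv (v.repr.symm : (κ →₀ R) ≃ₗ[R] M) h1
  rw [PR.span_basis_image_eq v s, PR.span_basis_image_eq v sᶜ]
  exact h2

/-- The span of part of a basis is equivalent to a finsupp space. -/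
noncomputable def PR.spanBasisImageEquiv :
    ↥(Submodule.span R (v '' s)) ≃ₗ[R] (↥s →₀ R) :=
  (LinearEquiv.ofEq _ _ (PR.span_basis_image_eq v s)) ≪≫ₗ
    (Submodule.equivMapOfInjective (v.repr.symm : (κ →₀ R) →ₗ[R] M)
      (by intro a b hab; exact v.repr.symm.injective hab) (Finsupp.supported R R s)).symm ≪≫ₗ
      Finsupp.supportedEquivFinsupp s

end BasisSpan

/-! ### Counting equivalences -/

/-- Subtype of a product determined by the first coordinate. -/
def PR.prodSubtypeEquiv {α β : Type*} (P : α → Prop) :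
    {p : α × β // P p.1} ≃ {a // P a} × β where
  toFun p := (⟨p.1.1, p.2⟩, p.1.2)
  invFun q := ⟨(q.1.1, q.2), q.1.2⟩
  left_inv p := rfl
  right_inv q := rfl

/-- Nonzero elements of `Fin d` are equivalent to `Fin (d - 1)`. -/
def PR.finNeZeroEquiv (d : ℕ) : {m : Fin d // (m : ℕ) ≠ 0} ≃ Fin (d - 1) where
  toFun m := ⟨(m.1 : ℕ) - 1, by have := m.1.isLt; have := m.2; omega⟩
  invFun k := ⟨⟨(k : ℕ) + 1, by have := k.isLt; omega⟩, by simp⟩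
  left_inv m := by
    apply Subtype.ext
    apply Fin.ext
    have := m.2
    simp only []
    omega
  right_inv k := by
    apply Fin.ext
    simp

/-! ### Facts about the ring `A = R[X]/(X^e)` -/

section RingAux

variable (R : Type*) [CommRing R] (e : ℕ)

theorem PR.piX_pow_e : piX R e ^ e = 0 := by
  rw [piX, ← map_pow, Ideal.Quotient.eq_zero_iff_mem]
  exact Ideal.subset_span rfl

theorem PR.piX_pow_of_le {n : ℕ} (hn : e ≤ n) : piX R e ^ n = 0 := by
  obtain ⟨k, rfl⟩ := Nat.le.dest hn
  rw [pow_add, PR.piX_pow_e, zero_mul]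

theorem PR.exists_div (he : 1 ≤ e) {a : TruncPoly R e}
    (ha : piX R e ^ (e - 1) * a = 0) : ∃ c, a = piX R e * c := by
  obtain ⟨p, rfl⟩ := Ideal.Quotient.mk_surjective
    (I := Ideal.span {(Polynomial.X : Polynomial R) ^ e}) a
  have ha' : (Polynomial.X : Polynomial R) ^ e ∣ Polynomial.X ^ (e - 1) * p := by
    rw [← Ideal.mem_span_singleton, ← Ideal.Quotient.eq_zero_iff_mem, map_mul, map_pow]
    exact ha
  obtain ⟨q, hq⟩ := ha'
  have hXe : (Polynomial.X : Polynomial R) ^ e = Polynomial.X ^ (e - 1) * Polynomial.X := by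
    rw [← pow_succ, Nat.sub_add_cancel he]
  rw [hXe, mul_assoc] at hq
  have hp : p = Polynomial.X * q := (Polynomial.monic_X_pow (e - 1)).isRegular.left hq
  exact ⟨Ideal.Quotient.mk _ q, by rw [hp, map_mul]; rfl⟩

/-- The `R`-basis `1, π, …, π^(e-1)` of `A = R[X]/(X^e)`. -/
noncomputable def PR.truncBasis [Nontrivial R] : Module.Basis (Fin e) R (TruncPoly R e) :=
  (AdjoinRoot.powerBasis' (Polynomial.monic_X_pow (R := R) e)).basis.reindex
    (finCongr (by rw [AdjoinRoot.powerBasis'_dim, Polynomial.natDegree_X_pow]))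

theorem PR.truncBasis_apply [Nontrivial R] (m : Fin e) :
    PR.truncBasis R e m = piX R e ^ (m : ℕ) := by
  rw [PR.truncBasis]
  erw [Module.Basis.reindex_apply, PowerBasis.coe_basis]
  rfl

theorem PR.finite_trunc [Nontrivial R] : Module.Finite R (TruncPoly R e) :=
  Module.Finite.of_basis (PR.truncBasis R e)

theorem PR.free_trunc [Nontrivial R] : Module.Free R (TruncPoly R e) :=
  Module.Free.of_basis (PR.truncBasis R e)

theorem PR.trunc_nontrivial [Nontrivial R] (he : 1 ≤ e) : Nontrivial (TruncPoly R e) := by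
  apply Ideal.Quotient.nontrivial_iff.mpr
  intro h
  rw [Ideal.eq_top_iff_one, Ideal.mem_span_singleton] at h
  obtain ⟨q, hq⟩ := h
  have h1 := congrArg (Polynomial.eval (0 : R)) hq
  rw [Polynomial.eval_one, Polynomial.eval_mul, Polynomial.eval_pow, Polynomial.eval_X,
    zero_pow (by omega : e ≠ 0), zero_mul] at h1
  exact one_ne_zero h1

end RingAux

/-! ### Facts about free modules over `A` -/

section ModuleAux

variable (R : Type*) [CommRing R] (e : ℕ)
  (E : Type*) [AddCommGroup E] [Module (TruncPoly R e) E] [Module R E]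
  [IsScalarTower R (TruncPoly R e) E]

@[simp] theorem PR.mulPi_apply (k : ℕ) (x : E) : mulPi R e E k x = piX R e ^ k • x := rfl

variable [Module.Finite (TruncPoly R e) E] [Module.Free (TruncPoly R e) E]

include e in
theorem PR.module_finite_R [Nontrivial R] : Module.Finite R E :=
  haveI := PR.finite_trunc R e
  Module.Finite.trans (TruncPoly R e) E

/-- The big `R`-basis of `E`, indexed by `Fin e × ι`. -/
noncomputable def PR.bigBasis [Nontrivial R] :
    Module.Basis (Fin e × Module.Free.ChooseBasisIndex (TruncPoly R e) E) R E :=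
  (PR.truncBasis R e).smulTower (Module.Free.chooseBasis (TruncPoly R e) E)

theorem PR.bigBasis_apply [Nontrivial R] (m : Fin e) (i : Module.Free.ChooseBasisIndex (TruncPoly R e) E) :
    PR.bigBasis R e E (m, i) = piX R e ^ (m : ℕ) • Module.Free.chooseBasis (TruncPoly R e) E i := by
  rw [PR.bigBasis, Module.Basis.smulTower_apply, PR.truncBasis_apply]

include e in
theorem PR.module_free_R [Nontrivial R] : Module.Free R E :=
  Module.Free.of_basis (PR.bigBasis R e E)

/-- Any `π^(e-1)`-torsion element is divisible by `π`. -/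
theorem PR.pitor_mem_range (he : 1 ≤ e) {x : E} (hx : piX R e ^ (e - 1) • x = 0) :
    x ∈ LinearMap.range (mulPi R e E 1) := by
  classical
  set b := Module.Free.chooseBasis (TruncPoly R e) E with hb
  have hdiv : ∀ i, ∃ c, b.repr x i = piX R e * c := by
    intro i
    apply PR.exists_div R e he
    have h1 := congrArg (fun z => b.repr z i) hx
    simpa [map_smul, Finsupp.smul_apply, smul_eq_mul] using h1
  choose c hc using hdiv
  refine ⟨∑ i, c i • b i, ?_⟩
  rw [PR.mulPi_apply, pow_one, Finset.smul_sum]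
  calc ∑ i, piX R e • c i • b i = ∑ i, b.repr x i • b i := by
        refine Finset.sum_congr rfl fun i _ => ?_
        rw [smul_smul, ← hc i]
    _ = x := b.sum_repr x

/-- The subset of the index set giving `πE`. -/
def PR.sIdx : Set (Fin e × Module.Free.ChooseBasisIndex (TruncPoly R e) E) :=
  {p | (p.1 : ℕ) ≠ 0}

theorem PR.range_eq_span [Nontrivial R] :
    LinearMap.range (mulPi R e E 1) =
      Submodule.span R (PR.bigBasis R e E '' PR.sIdx R e E) := by
  rw [LinearMap.range_eq_map, ← (PR.bigBasis R e E).span_eq, Submodule.map_span]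
  apply le_antisymm
  · rw [Submodule.span_le]
    rintro _ ⟨_, ⟨⟨m, i⟩, rfl⟩, rfl⟩
    by_cases hm : (m : ℕ) + 1 < e
    · have h1 : mulPi R e E 1 (PR.bigBasis R e E (m, i)) =
          PR.bigBasis R e E (⟨(m : ℕ) + 1, hm⟩, i) := by
        rw [PR.mulPi_apply, PR.bigBasis_apply, PR.bigBasis_apply, smul_smul, ← pow_add,
          add_comm 1 (m : ℕ)]
      rw [h1]
      exact Submodule.subset_span ⟨(⟨(m : ℕ) + 1, hm⟩, i), by simp [PR.sIdx], rfl⟩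
    · have h1 : mulPi R e E 1 (PR.bigBasis R e E (m, i)) = 0 := by
        rw [PR.mulPi_apply, PR.bigBasis_apply, smul_smul, ← pow_add,
          PR.piX_pow_of_le R e (by omega)]
        exact zero_smul (TruncPoly R e) ((Module.Free.chooseBasis (TruncPoly R e) E) i)
      rw [h1]
      exact zero_mem _
  · rw [Submodule.span_le]
    rintro _ ⟨⟨m, i⟩, hmi, rfl⟩
    have hmi' : (m : ℕ) ≠ 0 := hmi
    have hlt : (m : ℕ) - 1 < e := by have := m.isLt; omega
    refine Submodule.subset_span ⟨PR.bigBasis R e E (⟨(m : ℕ) - 1, hlt⟩, i),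
      Set.mem_range_self _, ?_⟩
    rw [PR.mulPi_apply, PR.bigBasis_apply, PR.bigBasis_apply, smul_smul, ← pow_add]
    congr 2
    have hval : ((⟨(m : ℕ) - 1, hlt⟩ : Fin e) : ℕ) = (m : ℕ) - 1 := rfl
    omega

theorem PR.range_struct [Nontrivial R] (he : 2 ≤ e) :
    Module.Finite R ↥(LinearMap.range (mulPi R e E 1)) ∧
    Module.Free R ↥(LinearMap.range (mulPi R e E 1)) ∧
    Module.finrank R ↥(LinearMap.range (mulPi R e E 1)) =
      (e - 1) * Module.finrank (TruncPoly R e) E ∧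
    Module.finrank R E = e * Module.finrank (TruncPoly R e) E := by
  classical
  set ι := Module.Free.ChooseBasisIndex (TruncPoly R e) E with hι
  set w := PR.bigBasis R e E with hw
  set s := PR.sIdx R e E with hs
  letI : Fintype ↥s := Fintype.ofFinite _
  let eT : ↥(LinearMap.range (mulPi R e E 1)) ≃ₗ[R] (↥s →₀ R) :=
    (LinearEquiv.ofEq _ _ (PR.range_eq_span R e E)) ≪≫ₗ PR.spanBasisImageEquiv w s
  haveI : Nontrivial (TruncPoly R e) := PR.trunc_nontrivial R e (by omega)
  have hcards : Fintype.card ↥s = (e - 1) * Fintype.card ι := by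
    have heq : ↥s ≃ Fin (e - 1) × ι :=
      (Equiv.subtypeEquivRight (fun p => Iff.rfl)).trans
        ((PR.prodSubtypeEquiv (fun m : Fin e => (m : ℕ) ≠ 0)).trans
          (Equiv.prodCongr (PR.finNeZeroEquiv e) (Equiv.refl ι)))
    rw [Fintype.card_congr heq, Fintype.card_prod, Fintype.card_fin]
  refine ⟨Module.Finite.equiv eT.symm, Module.Free.of_equiv eT.symm, ?_, ?_⟩
  · rw [eT.finrank_eq, Module.finrank_finsupp_self, Module.finrank_eq_card_chooseBasisIndex]
    exact hcards
  · rw [Module.finrank_eq_card_basis w, Fintype.card_prod, Fintype.card_fin,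
      Module.finrank_eq_card_chooseBasisIndex]

end ModuleAux

/-! ### Facts about PR filtrations -/

theorem PR.prf_facts {R : Type*} [CommRing R] [Nontrivial R] {e : ℕ} {E : Type*}
    [AddCommGroup E] [Module (TruncPoly R e) E] [Module R E]
    [IsScalarTower R (TruncPoly R e) E]
    {d₁ : ℕ} {F : ℕ → Submodule R E} (hF : IsPRFiltration R e E d₁ F) :
    ∀ j, j ≤ e → (∀ x ∈ F j, piX R e ^ j • x = 0) ∧ Module.Finite R (F j) ∧
      Module.Free R (F j) ∧ Module.finrank R (F j) = j * d₁ := by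
  obtain ⟨h0, hmono, hcompl, hquot, hpi⟩ := hF
  intro j
  induction j with
  | zero =>
    intro _
    have e0 : ↥(⊥ : Submodule R E) ≃ₗ[R] ↥(F 0) := LinearEquiv.ofEq _ _ h0.symm
    refine ⟨?_, Module.Finite.equiv e0, Module.Free.of_equiv e0, ?_⟩
    · intro x hx
      rw [h0, Submodule.mem_bot] at hx
      rw [hx, smul_zero]
    · rw [← e0.finrank_eq, finrank_bot, zero_mul]
  | succ j ih =>
    intro hje
    have hjlt : j < e := hje
    obtain ⟨htor, hfin, hfree, hrk⟩ := ih (le_of_lt hjlt)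
    have hquot' := hquot j hjlt
    haveI := hquot'.1
    haveI := hquot'.2.1
    refine ⟨?_, ?_⟩
    · intro x hx
      have h1 : piX R e • x ∈ F j := hpi j hjlt x hx
      rw [pow_succ, mul_smul]
      exact htor _ h1
    set P := (F j).comap (F (j + 1)).subtype with hP
    obtain ⟨c, hc⟩ := PR.exists_isCompl_of_proj_quot P
    have eP : P ≃ₗ[R] F j := Submodule.comapSubtypeEquivOfLe (hmono j hjlt)
    haveI : Module.Finite R P := Module.Finite.equiv eP.symm
    haveI : Module.Free R P := Module.Free.of_equiv eP.symm
    have ec : (↥(F (j + 1)) ⧸ P) ≃ₗ[R] ↥c := Submodule.quotientEquivOfIsCompl P c hc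
    haveI : Module.Finite R c := Module.Finite.equiv ec
    haveI : Module.Free R c := Module.Free.of_equiv ec
    have eprod : (P × c) ≃ₗ[R] ↥(F (j + 1)) := Submodule.prodEquivOfIsCompl P c hc
    refine ⟨Module.Finite.equiv eprod, Module.Free.of_equiv eprod, ?_⟩
    have h4 : Module.finrank R (F (j + 1)) = Module.finrank R P + Module.finrank R c :=
      PR.finrank_add_of_isCompl hc
    rw [h4, eP.finrank_eq, hrk, ← ec.finrank_eq, hquot'.2.2, Nat.succ_mul]

/-- **The submodules `F'^{[j]} = π^{-1}(F^{[j]})`.**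
Let `R` be a commutative local ring and `F^{[•]}` a Pappas–Rapoport filtration of rank `d₁`
on the finite free `A = R[X]/(X^e)`-module `E` of rank `h₁`, `0 < d₁ < h₁`, `e ≥ 2`.
For `0 ≤ j ≤ e-1`, with `F'^{[j]} := {x ∈ E : π·x ∈ F^{[j]}}`:
(i) `F^{[j+1]} ⊆ F'^{[j]}` and `π·F'^{[j]} = F^{[j]}`;
(ii) `F'^{[j]}` is an `R`-module direct summand of `E` and is finite free over `R` of rank
`h₁ + j·d₁`. -/
theorem pappas_rapoport_pi_preimage_filtration
    (R : Type*) [CommRing R] [IsLocalRing R] (e : ℕ) (he : 2 ≤ e) (h₁ d₁ : ℕ)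
    (hd : 0 < d₁) (hdh : d₁ < h₁)
    (E : Type*) [AddCommGroup E] [Module (TruncPoly R e) E] [Module R E]
    [IsScalarTower R (TruncPoly R e) E]
    [Module.Finite (TruncPoly R e) E] [Module.Free (TruncPoly R e) E]
    (hrank : Module.finrank (TruncPoly R e) E = h₁)
    (F : ℕ → Submodule R E) (hF : IsPRFiltration R e E d₁ F)
    (j : ℕ) (hj : j ≤ e - 1) :
    F (j + 1) ≤ PRdiv R e E F j ∧
    Submodule.map (mulPi R e E 1) (PRdiv R e E F j) = F j ∧
    (∃ q : Submodule R E, IsCompl (PRdiv R e E F j) q) ∧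
    Module.Finite R (PRdiv R e E F j) ∧ Module.Free R (PRdiv R e E F j) ∧
    Module.finrank R (PRdiv R e E F j) = h₁ + j * d₁ := by
  classical
  have hje : j < e := by omega
  have hfacts := PR.prf_facts hF
  obtain ⟨h0, hmono, hcompl, hquot, hpi⟩ := hF
  obtain ⟨htorj, hFjFin, hFjFree, hFjrk⟩ := hfacts j (le_of_lt hje)
  haveI := hFjFin
  haveI := hFjFree
  haveI : Module.Finite R E := PR.module_finite_R R e E
  haveI : Module.Free R E := PR.module_free_R R e E
  -- (i) first part
  have hsub : F (j + 1) ≤ PRdiv R e E F j := by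
    intro x hx
    have h1 := hpi j hje x hx
    show mulPi R e E 1 x ∈ F j
    rw [PR.mulPi_apply, pow_one]
    exact h1
  -- the submodule `T = πE`
  set T := LinearMap.range (mulPi R e E 1) with hT
  obtain ⟨hTFin, hTFree, hTrk, hErk⟩ := PR.range_struct R e E he
  haveI := hTFin
  haveI := hTFree
  have hFT : F j ≤ T := by
    intro x hx
    apply PR.pitor_mem_range R e E (by omega)
    have h1 := htorj x hx
    have h2 : piX R e ^ (e - 1) = piX R e ^ (e - 1 - j) * piX R e ^ j := by
      rw [← pow_add, Nat.sub_add_cancel hj]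
    rw [h2, mul_smul, h1, smul_zero]
  -- (i) second part
  have hmap : Submodule.map (mulPi R e E 1) (PRdiv R e E F j) = F j := by
    apply le_antisymm
    · rintro _ ⟨x, hx, rfl⟩
      exact hx
    · intro y hy
      obtain ⟨x, hx⟩ := hFT hy
      refine ⟨x, ?_, hx⟩
      show mulPi R e E 1 x ∈ F j
      rw [hx]
      exact hy
  -- complements inside T
  obtain ⟨q, hq⟩ := hcompl j (le_of_lt hje)
  set Fj' := (F j).comap T.subtype with hFj'
  set q' := q.comap T.subtype with hq'def
  have hq' : IsCompl Fj' q' := by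
    constructor
    · rw [Submodule.disjoint_def]
      intro x hx1 hx2
      have : (x : E) ∈ F j ⊓ q := ⟨hx1, hx2⟩
      rw [hq.inf_eq_bot, Submodule.mem_bot] at this
      exact Subtype.ext this
    · rw [codisjoint_iff, eq_top_iff]
      rintro ⟨x, hxT⟩ _
      have hx : x ∈ F j ⊔ q := by rw [hq.sup_eq_top]; trivial
      obtain ⟨f, hf, w, hw, hfw⟩ := Submodule.mem_sup.mp hx
      have hwT : w ∈ T := by
        have : w = x - f := by rw [← hfw]; abel
        rw [this]
        exact Submodule.sub_mem T hxT (hFT hf)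
      refine Submodule.mem_sup.mpr ⟨⟨f, hFT hf⟩, hf, ⟨w, hwT⟩, hw, ?_⟩
      apply Subtype.ext
      exact hfw
  have eFj' : Fj' ≃ₗ[R] F j := Submodule.comapSubtypeEquivOfLe hFT
  haveI : Module.Finite R Fj' := Module.Finite.equiv eFj'.symm
  haveI : Module.Free R Fj' := Module.Free.of_equiv eFj'.symm
  haveI : Module.Finite R q' := PR.finite_of_isCompl hq'.symm
  haveI : Module.Projective R q' := PR.projective_of_isCompl hq'.symm
  haveI : Module.Free R q' := PR.free_of_fp
  have hTsplit : Module.finrank R T = Module.finrank R Fj' + Module.finrank R q' :=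
    PR.finrank_add_of_isCompl hq'
  -- the quotient `E ⧸ F'^{[j]}`
  let f1 : E →ₗ[R] T := (mulPi R e E 1).rangeRestrict
  let φ : E →ₗ[R] (↥T ⧸ Fj') := Fj'.mkQ.comp f1
  have hker : LinearMap.ker φ = PRdiv R e E F j := by
    ext x
    show φ x = 0 ↔ mulPi R e E 1 x ∈ F j
    rw [LinearMap.comp_apply, Submodule.mkQ_apply, Submodule.Quotient.mk_eq_zero]
    show (f1 x : E) ∈ F j ↔ _
    rfl
  have hφs : Function.Surjective φ :=
    (Submodule.mkQ_surjective _).comp (LinearMap.surjective_rangeRestrict _)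
  let eQ : (E ⧸ PRdiv R e E F j) ≃ₗ[R] ↥q' :=
    (Submodule.quotEquivOfEq _ _ hker.symm) ≪≫ₗ (φ.quotKerEquivOfSurjective hφs) ≪≫ₗ
      (Submodule.quotientEquivOfIsCompl Fj' q' hq')
  haveI : Module.Finite R (E ⧸ PRdiv R e E F j) := Module.Finite.equiv eQ.symm
  haveI : Module.Free R (E ⧸ PRdiv R e E F j) := Module.Free.of_equiv eQ.symm
  obtain ⟨q₀, hq₀⟩ := PR.exists_isCompl_of_proj_quot (PRdiv R e E F j)
  haveI hPfin : Module.Finite R (PRdiv R e E F j) := PR.finite_of_isCompl hq₀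
  haveI : Module.Projective R (PRdiv R e E F j) := PR.projective_of_isCompl hq₀
  haveI hPfree : Module.Free R (PRdiv R e E F j) := PR.free_of_fp
  have eq₀ : ↥q₀ ≃ₗ[R] ↥q' :=
    (Submodule.quotientEquivOfIsCompl (PRdiv R e E F j) q₀ hq₀).symm ≪≫ₗ eQ
  haveI : Module.Finite R q₀ := Module.Finite.equiv eq₀.symm
  haveI : Module.Free R q₀ := Module.Free.of_equiv eq₀.symm
  have hEsplit : Module.finrank R E =
      Module.finrank R (PRdiv R e E F j) + Module.finrank R q₀ :=
    PR.finrank_add_of_isCompl hq₀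
  refine ⟨hsub, hmap, ⟨q₀, hq₀⟩, hPfin, hPfree, ?_⟩
  -- rank computation
  rw [hrank] at hTrk hErk
  rw [eq₀.finrank_eq] at hEsplit
  rw [hErk] at hEsplit
  rw [hTrk, eFj'.finrank_eq, hFjrk] at hTsplit
  have hmul : (e - 1) * h₁ = e * h₁ - h₁ := Nat.sub_one_mul e h₁
  have hle : h₁ ≤ e * h₁ := by
    have h9 : 1 * h₁ ≤ e * h₁ := Nat.mul_le_mul_right h₁ (by omega)
    rwa [one_mul] at h9
  omega
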